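/- For all positive integers m, s, all natural numbers n, r, and all complex numbers x, ξ, ζ, X, Ω, U, y, z, Y, Z: _LH_n^{(m,s)}(x,ξ,ζ) · _LH_r^{(m,s)}(X,Ω,U) = Σ_{k=0}^{n} Σ_{p=0}^{r} C(n,k) C(r,p) · g_k^s(ξ−y, ζ−z) · g_p^s(Ω−Y, U−Z) · _LH_{n-k}^{(m,s)}(x,y,z) · _LH_{r-p}^{(m,s)}(X,Y,Z), where C(a,b) denotes the ordinary binomial coefficient. -/

import Mathlib

/-- The Gould-Hopper polynomial g_n^m(x,y) = n! Σ_{k=0}^{⌊n/m⌋} x^{n-mk} y^k/(k!(n-mk)!). -/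
noncomputable def gouldHopper (m : ℕ) (x y : ℂ) (n : ℕ) : ℂ :=
  (Nat.factorial n : ℂ) * ∑ k ∈ Finset.range (n / m + 1),
    x ^ (n - m * k) * y ^ k /
      ((Nat.factorial k : ℂ) * (Nat.factorial (n - m * k) : ℂ))

/-- The 2D Laguerre polynomial _mL_n(x,y) = n! Σ_{k=0}^{⌊n/m⌋} x^k y^{n-mk}/((k!)² (n-mk)!). -/
noncomputable def lag2D (m : ℕ) (x y : ℂ) (n : ℕ) : ℂ :=
  (Nat.factorial n : ℂ) * ∑ k ∈ Finset.range (n / m + 1),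
    x ^ k * y ^ (n - m * k) /
      ((Nat.factorial k : ℂ) ^ 2 * (Nat.factorial (n - m * k) : ℂ))

/-- The Laguerre-Gould-Hopper polynomial
_LH_n^{(m,s)}(x,y,z) = n! Σ_{k=0}^{⌊n/s⌋} z^k _mL_{n-sk}(x,y)/(k!(n-sk)!). -/
noncomputable def LGH (m s : ℕ) (x y z : ℂ) (n : ℕ) : ℂ :=
  (Nat.factorial n : ℂ) * ∑ k ∈ Finset.range (n / s + 1),
    z ^ k * lag2D m x y (n - s * k) /
      ((Nat.factorial k : ℂ) * (Nat.factorial (n - s * k) : ℂ))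

open Finset PowerSeries

noncomputable def dilC (d : ℕ) (c : ℕ → ℂ) : PowerSeries ℂ :=
  PowerSeries.mk fun i => if d ∣ i then c (i / d) else 0

lemma coeff_dilC (d : ℕ) (c : ℕ → ℂ) (i : ℕ) :
    PowerSeries.coeff i (dilC d c) = if d ∣ i then c (i / d) else 0 :=
  PowerSeries.coeff_mk _ _

lemma sum_ite_dvd (d : ℕ) (hd : 0 < d) (n : ℕ) (f : ℕ → ℂ) :
    ∑ i ∈ range (n + 1), (if d ∣ i then f i else 0)
      = ∑ k ∈ range (n / d + 1), f (d * k) := by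
  rw [← Finset.sum_filter]
  have himg : (range (n+1)).filter (d ∣ ·) = (range (n/d+1)).image (d * ·) := by
    ext i
    simp only [mem_filter, mem_range, mem_image, Nat.lt_succ_iff]
    constructor
    · rintro ⟨hi, k, rfl⟩
      exact ⟨k, (Nat.le_div_iff_mul_le hd).2 (by rw [mul_comm]; exact hi), rfl⟩
    · rintro ⟨k, hk, rfl⟩
      refine ⟨?_, Dvd.intro k rfl⟩
      have := (Nat.le_div_iff_mul_le hd).1 hk
      rw [mul_comm]; exact this
  rw [himg, Finset.sum_image]
  intro a _ b _ h
  exact Nat.eq_of_mul_eq_mul_left hd h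

lemma coeff_dilC_mul (d : ℕ) (hd : 0 < d) (c : ℕ → ℂ) (F : PowerSeries ℂ) (n : ℕ) :
    PowerSeries.coeff n (dilC d c * F)
      = ∑ k ∈ range (n / d + 1), c k * PowerSeries.coeff (n - d * k) F := by
  rw [PowerSeries.coeff_mul, Finset.Nat.sum_antidiagonal_eq_sum_range_succ_mk]
  simp only [coeff_dilC, ite_mul, zero_mul]
  rw [sum_ite_dvd d hd n (fun i => c (i/d) * PowerSeries.coeff (n - i) F)]
  refine Finset.sum_congr rfl fun k _ => ?_
  rw [Nat.mul_div_cancel_left _ hd]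

noncomputable def AserC (a : ℂ) : PowerSeries ℂ := dilC 1 (fun k => a ^ k / k.factorial)

noncomputable def BserC (d : ℕ) (b : ℂ) : PowerSeries ℂ := dilC d (fun k => b ^ k / k.factorial)

lemma exp_conv (a b : ℂ) (N : ℕ) :
    ∑ k ∈ range (N + 1), a ^ k / (k.factorial : ℂ) * (b ^ (N - k) / ((N - k).factorial : ℂ))
      = (a + b) ^ N / (N.factorial : ℂ) := by
  rw [add_pow, Finset.sum_div]
  refine Finset.sum_congr rfl fun k hk => ?_
  have hkN : k ≤ N := Nat.lt_succ_iff.1 (mem_range.1 hk)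
  rw [Nat.cast_choose ℂ hkN]
  have h1 : (k.factorial : ℂ) ≠ 0 := Nat.cast_ne_zero.2 k.factorial_ne_zero
  have h2 : ((N - k).factorial : ℂ) ≠ 0 := Nat.cast_ne_zero.2 (N - k).factorial_ne_zero
  have h3 : (N.factorial : ℂ) ≠ 0 := Nat.cast_ne_zero.2 N.factorial_ne_zero
  field_simp

lemma coeff_AserC (a : ℂ) (i : ℕ) :
    PowerSeries.coeff i (AserC a) = a ^ i / i.factorial := by
  rw [AserC, coeff_dilC]
  simp

lemma AserC_mul (a b : ℂ) : AserC a * AserC b = AserC (a + b) := by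
  ext n
  simp only [AserC]
  rw [coeff_dilC_mul 1 one_pos, coeff_dilC]
  simp only [Nat.div_one, one_mul, Nat.one_dvd, if_true]
  calc ∑ k ∈ range (n + 1), a ^ k / (k.factorial : ℂ)
        * PowerSeries.coeff (n - k) (AserC b)
      = ∑ k ∈ range (n + 1), a ^ k / (k.factorial : ℂ) * (b ^ (n-k) / ((n-k).factorial : ℂ)) := by
        refine Finset.sum_congr rfl fun k _ => ?_
        rw [coeff_AserC]
    _ = (a + b) ^ n / (n.factorial : ℂ) := exp_conv a b n

lemma BserC_mul (d : ℕ) (hd : 0 < d) (b b' : ℂ) :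
    BserC d b * BserC d b' = BserC d (b + b') := by
  ext n
  simp only [BserC]
  rw [coeff_dilC_mul d hd, coeff_dilC]
  by_cases h : d ∣ n
  · obtain ⟨N, rfl⟩ := h
    rw [if_pos ⟨N, rfl⟩, Nat.mul_div_cancel_left _ hd]
    calc ∑ k ∈ range (N + 1), b ^ k / (k.factorial : ℂ)
          * PowerSeries.coeff (d * N - d * k) (BserC d b')
        = ∑ k ∈ range (N + 1), b ^ k / (k.factorial : ℂ)
            * (b' ^ (N - k) / ((N - k).factorial : ℂ)) := by
          refine Finset.sum_congr rfl fun k hk => ?_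
          have hkN : k ≤ N := Nat.lt_succ_iff.1 (mem_range.1 hk)
          have hsub : d * N - d * k = d * (N - k) := by
            rw [Nat.mul_sub]
          rw [hsub, BserC, coeff_dilC, if_pos ⟨N - k, rfl⟩, Nat.mul_div_cancel_left _ hd]
      _ = (b + b') ^ N / (N.factorial : ℂ) := exp_conv b b' N
  · rw [if_neg h]
    refine Finset.sum_eq_zero fun k hk => ?_
    have hkn : d * k ≤ n := by
      have := (Nat.le_div_iff_mul_le hd).1 (Nat.lt_succ_iff.1 (mem_range.1 hk))
      rw [mul_comm]; exact this
    have : ¬ d ∣ (n - d * k) := by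
      intro hdvd
      exact h (by have := Nat.dvd_add hdvd (Dvd.intro k rfl); rwa [Nat.sub_add_cancel hkn] at this)
    rw [coeff_dilC, if_neg this, mul_zero]

noncomputable def LserC (m : ℕ) (x : ℂ) : PowerSeries ℂ :=
  dilC m (fun l => x ^ l / (l.factorial : ℂ) ^ 2)

lemma coeff_GH (s : ℕ) (hs : 0 < s) (a b : ℂ) (k : ℕ) :
    PowerSeries.coeff k (BserC s b * AserC a)
      = gouldHopper s a b k / (k.factorial : ℂ) := by
  have hk : (k.factorial : ℂ) ≠ 0 := Nat.cast_ne_zero.2 k.factorial_ne_zero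
  rw [BserC, coeff_dilC_mul s hs, gouldHopper, mul_div_cancel_left₀ _ hk]
  refine Finset.sum_congr rfl fun j _ => ?_
  rw [coeff_AserC]
  ring

lemma coeff_lagser (m : ℕ) (hm : 0 < m) (x y : ℂ) (j : ℕ) :
    PowerSeries.coeff j (LserC m x * AserC y) = lag2D m x y j / (j.factorial : ℂ) := by
  have hj : (j.factorial : ℂ) ≠ 0 := Nat.cast_ne_zero.2 j.factorial_ne_zero
  rw [LserC, coeff_dilC_mul m hm, lag2D, mul_div_cancel_left₀ _ hj]
  refine Finset.sum_congr rfl fun l _ => ?_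
  rw [coeff_AserC]
  ring

lemma coeff_LGHser (m s : ℕ) (hm : 0 < m) (hs : 0 < s) (x y z : ℂ) (n : ℕ) :
    PowerSeries.coeff n (BserC s z * (LserC m x * AserC y))
      = LGH m s x y z n / (n.factorial : ℂ) := by
  have hn : (n.factorial : ℂ) ≠ 0 := Nat.cast_ne_zero.2 n.factorial_ne_zero
  rw [BserC, coeff_dilC_mul s hs, LGH, mul_div_cancel_left₀ _ hn]
  refine Finset.sum_congr rfl fun k _ => ?_
  rw [coeff_lagser m hm]
  ring

lemma LGH_expand (m s : ℕ) (hm : 0 < m) (hs : 0 < s) (n : ℕ) (x ξ ζ y z : ℂ) :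
    LGH m s x ξ ζ n = ∑ k ∈ range (n + 1),
      (n.choose k : ℂ) * gouldHopper s (ξ - y) (ζ - z) k * LGH m s x y z (n - k) := by
  have h1 : BserC s ζ = BserC s (ζ - z) * BserC s z := by
    rw [BserC_mul s hs]; congr 1; ring
  have h2 : AserC ξ = AserC (ξ - y) * AserC y := by
    rw [AserC_mul]; congr 1; ring
  have key : BserC s ζ * (LserC m x * AserC ξ)
      = (BserC s (ζ - z) * AserC (ξ - y)) * (BserC s z * (LserC m x * AserC y)) := by
    rw [h1, h2]; ring
  have hcoeff := congrArg (PowerSeries.coeff n) key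
  rw [coeff_LGHser m s hm hs, PowerSeries.coeff_mul,
    Finset.Nat.sum_antidiagonal_eq_sum_range_succ_mk] at hcoeff
  have hn : (n.factorial : ℂ) ≠ 0 := Nat.cast_ne_zero.2 n.factorial_ne_zero
  rw [div_eq_iff hn] at hcoeff
  rw [hcoeff, Finset.sum_mul]
  refine Finset.sum_congr rfl fun k hk => ?_
  have hkn : k ≤ n := Nat.lt_succ_iff.1 (mem_range.1 hk)
  rw [coeff_GH s hs, coeff_LGHser m s hm hs, Nat.cast_choose ℂ hkn]
  have h1 : (k.factorial : ℂ) ≠ 0 := Nat.cast_ne_zero.2 k.factorial_ne_zero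
  have h2 : ((n - k).factorial : ℂ) ≠ 0 := Nat.cast_ne_zero.2 (n - k).factorial_ne_zero
  field_simp

theorem LGH_product_formula (m s : ℕ) (hm : 0 < m) (hs : 0 < s)
    (n r : ℕ) (x ξ ζ X Ω U y z Y Z : ℂ) :
    LGH m s x ξ ζ n * LGH m s X Ω U r =
      ∑ k ∈ Finset.range (n + 1), ∑ p ∈ Finset.range (r + 1),
        (Nat.choose n k : ℂ) * (Nat.choose r p : ℂ) *
          gouldHopper s (ξ - y) (ζ - z) k * gouldHopper s (Ω - Y) (U - Z) p *
          LGH m s x y z (n - k) * LGH m s X Y Z (r - p) := by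
  rw [LGH_expand m s hm hs n x ξ ζ y z, LGH_expand m s hm hs r X Ω U Y Z,
    Finset.sum_mul_sum]
  refine Finset.sum_congr rfl fun k _ => Finset.sum_congr rfl fun p _ => ?_
  ring
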